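/- Every set cover of a subsumption- and subset-reduced instance that excludes a set S must include, for each frequency-2 element e ∈ S, the unique other set containing e; hence if S has r₂ frequency-2 elements, any set cover avoiding S contains at least r₂ sets other than S. -/

import Mathlib

/-- In a subset- and subsumption-reduced instance, any set cover `C` avoiding `S₀`
contains, for each frequency-2 element `e ∈ S₀`, the unique other set containing `e`;
hence `C` contains at least `r₂` sets other than `S₀`, where `r₂` is the number of
frequency-2 elements of `S₀`. -/
theorem stmt_18 {α : Type*} [DecidableEq α] (S : Finset (Finset α)) (S₀ : Finset α)
    (hS₀ : S₀ ∈ S)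
    (hnosub : ∀ T₁ ∈ S, ∀ T₂ ∈ S, T₁ ⊆ T₂ → T₁ = T₂)
    (hnosubsumption : ∀ e ∈ S.biUnion id, ∀ e' ∈ S.biUnion id, e ≠ e' →
      ¬ (S.filter (fun T => e' ∈ T) ⊆ S.filter (fun T => e ∈ T))) :
    ∀ C ⊆ S, C.biUnion id = S.biUnion id → S₀ ∉ C →
      (∀ e ∈ S₀, (S.filter (fun T => e ∈ T)).card = 2 →
        ∀ T ∈ S, e ∈ T → T ≠ S₀ → T ∈ C) ∧
      (S₀.filter (fun e => (S.filter (fun T => e ∈ T)).card = 2)).card ≤ C.card := by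
  intro C hCS hcov hS₀C
  classical
  have hmemU : ∀ e ∈ S₀, e ∈ S.biUnion id := by
    intro e he
    exact Finset.mem_biUnion.mpr ⟨S₀, hS₀, he⟩
  have hexist : ∀ e ∈ S₀, ∃ T ∈ C, e ∈ T := by
    intro e he
    have := hmemU e he
    rw [← hcov] at this
    simpa using Finset.mem_biUnion.mp this
  -- occurrence set characterization
  have hocc : ∀ e ∈ S₀, (S.filter (fun T => e ∈ T)).card = 2 →
      ∀ T ∈ S, e ∈ T → T ≠ S₀ → S.filter (fun T => e ∈ T) = {S₀, T} := by
    intro e he hcard T hTS heT hTne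
    have hsub : ({S₀, T} : Finset (Finset α)) ⊆ S.filter (fun T => e ∈ T) := by
      intro X hX
      simp only [Finset.mem_insert, Finset.mem_singleton] at hX
      rcases hX with rfl | rfl
      · exact Finset.mem_filter.mpr ⟨hS₀, he⟩
      · exact Finset.mem_filter.mpr ⟨hTS, heT⟩
    have hc2 : ({S₀, T} : Finset (Finset α)).card = 2 := by
      rw [Finset.card_insert_of_notMem (by simpa using (Ne.symm hTne))]
      simp
    exact (Finset.eq_of_subset_of_card_le hsub (by rw [hcard, hc2])).symm
  have hfirst : ∀ e ∈ S₀, (S.filter (fun T => e ∈ T)).card = 2 →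
      ∀ T ∈ S, e ∈ T → T ≠ S₀ → T ∈ C := by
    intro e he hcard T hTS heT hTne
    obtain ⟨U, hUC, heU⟩ := hexist e he
    have hUS : U ∈ S := hCS hUC
    have hUne : U ≠ S₀ := fun h => hS₀C (h ▸ hUC)
    have h1 := hocc e he hcard T hTS heT hTne
    have h2 := hocc e he hcard U hUS heU hUne
    have : U = T := by
      have : T ∈ ({S₀, U} : Finset (Finset α)) := by
        rw [← h2, h1]; simp
      simp only [Finset.mem_insert, Finset.mem_singleton] at this
      rcases this with h | h
      · exact absurd h hTne
      · exact h.symm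
    exact this ▸ hUC
  refine ⟨hfirst, ?_⟩
  have hchoice : ∀ e, e ∈ S₀.filter (fun e => (S.filter (fun T => e ∈ T)).card = 2) →
      ∃ T ∈ C, e ∈ T := by
    intro e he
    exact hexist e (Finset.mem_filter.mp he).1
  choose f hfC hfe using hchoice
  -- need f as total function for card_le_card_of_injOn; use set-based injOn lemma
  apply Finset.card_le_card_of_injOn (fun e => if h : e ∈ S₀.filter (fun e => (S.filter (fun T => e ∈ T)).card = 2) then f e h else ∅)
  · intro e he
    simp only [he, dif_pos]
    exact Finset.mem_coe.mpr (by rw [dif_pos (Finset.mem_coe.mp he)]; exact hfC e he)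
  · intro e he e' he' heq
    simp only [Finset.coe_filter, Set.mem_setOf_eq] at he he'
    have he'' : e ∈ S₀.filter (fun e => (S.filter (fun T => e ∈ T)).card = 2) :=
      Finset.mem_filter.mpr ⟨he.1, he.2⟩
    have he''' : e' ∈ S₀.filter (fun e => (S.filter (fun T => e ∈ T)).card = 2) :=
      Finset.mem_filter.mpr ⟨he'.1, he'.2⟩
    simp only [he'', he''', dif_pos] at heq
    by_contra hne
    set T := f e he'' with hT
    have hTS : T ∈ S := hCS (hfC e he'')
    have hTne : T ≠ S₀ := fun h => hS₀C (h ▸ hfC e he'')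
    have h1 := hocc e he.1 he.2 T hTS (hfe e he'') hTne
    have h2 := hocc e' he'.1 he'.2 T hTS (heq ▸ hfe e' he''') hTne
    exact hnosubsumption e (hmemU e he.1) e' (hmemU e' he'.1) hne
      (by rw [h1, h2])
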